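/- For two polynomials g, h ∈ A[x] over a commutative ring A with deg(g) < ℓ, one has c(g)·c(h) = c(g(x)·h(x^ℓ)) and c(g) + c(h) = c(g(x) + x^ℓ·h(x)), where c(f) denotes the content ideal of f. -/

import Mathlib

open Polynomial

/-- The content ideal of a polynomial: the ideal generated by its coefficients. -/
def contentIdeal {A : Type*} [CommRing A] (f : A[X]) : Ideal A :=
  Ideal.span (Set.range f.coeff)

lemma coeff_mem_contentIdeal {A : Type*} [CommRing A] (f : A[X]) (n : ℕ) :
    f.coeff n ∈ _root_.contentIdeal f :=
  Ideal.subset_span ⟨n, rfl⟩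

lemma contentIdeal_le_iff {A : Type*} [CommRing A] {f : A[X]} {I : Ideal A} :
    _root_.contentIdeal f ≤ I ↔ ∀ n, f.coeff n ∈ I := by
  rw [_root_.contentIdeal, Ideal.span_le, Set.range_subset_iff]; rfl

lemma key_coeff {A : Type*} [CommRing A] (g h : A[X]) {ℓ : ℕ} (hl : 0 < ℓ)
    (hg : g.degree < (ℓ : ℕ)) (n : ℕ) :
    (g * h.comp (X ^ ℓ)).coeff n = g.coeff (n % ℓ) * h.coeff (n / ℓ) := by
  rw [← expand_eq_comp_X_pow, coeff_mul]
  rw [Finset.sum_eq_single (n % ℓ, ℓ * (n / ℓ))]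
  · rw [coeff_expand_mul' hl]
  · rintro ⟨a, b⟩ hab hne
    rw [Finset.HasAntidiagonal.mem_antidiagonal] at hab
    rw [coeff_expand hl]
    split_ifs with hd
    · obtain ⟨c, rfl⟩ := hd
      rcases lt_trichotomy c (n / ℓ) with hc | hc | hc
      · have ha : (ℓ : ℕ) ≤ a := by
          have h1 : ℓ * c + ℓ ≤ ℓ * (n / ℓ) := by
            rw [← Nat.mul_succ]; exact Nat.mul_le_mul_left ℓ hc
          have h2 : ℓ * (n / ℓ) ≤ n := Nat.mul_div_le n ℓ
          omega
        rw [coeff_eq_zero_of_degree_lt (lt_of_lt_of_le hg (by exact_mod_cast ha)),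
          zero_mul]
      · subst hc
        have ha : a = n % ℓ :=
          Nat.add_right_cancel (hab.trans (Nat.mod_add_div n ℓ).symm)
        exact absurd (by rw [ha]) hne
      · have h1 : ℓ * (n / ℓ) + ℓ ≤ ℓ * c := by
          rw [← Nat.mul_succ]; exact Nat.mul_le_mul_left ℓ hc
        have h2 : ℓ * (n / ℓ) + n % ℓ = n := by
          rw [add_comm, Nat.mod_add_div]
        have h3 := Nat.mod_lt n hl
        exfalso; omega
    · rw [mul_zero]
  · intro hmem
    exfalso
    apply hmem
    rw [Finset.HasAntidiagonal.mem_antidiagonal]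
    rw [add_comm, Nat.div_add_mod]

theorem content_mul_add_shift {A : Type*} [CommRing A] (g h : A[X]) (ℓ : ℕ)
    (hg : g.degree < (ℓ : ℕ)) :
    _root_.contentIdeal g * _root_.contentIdeal h = _root_.contentIdeal (g * h.comp (X ^ ℓ)) ∧
    _root_.contentIdeal g + _root_.contentIdeal h = _root_.contentIdeal (g + X ^ ℓ * h) := by
  rcases Nat.eq_zero_or_pos ℓ with rfl | hl
  · have hg0 : g = 0 := degree_eq_bot.mp (Nat.WithBot.lt_zero_iff.mp (by simpa using hg))
    subst hg0
    have h0 : _root_.contentIdeal (0 : A[X]) = ⊥ := by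
      have hc : (coeff (0 : A[X])) = fun _ => (0 : A) := by funext n; simp
      rw [_root_.contentIdeal, hc, Set.range_const]
      exact Ideal.span_singleton_eq_bot.mpr rfl
    constructor
    · rw [zero_mul, h0]
      simp
    · rw [pow_zero, one_mul, zero_add, h0]
      simp [Submodule.add_eq_sup]
  constructor
  · apply le_antisymm
    · unfold _root_.contentIdeal
      rw [Ideal.span_mul_span, Ideal.span_le]
      simp only [Set.mul_subset_iff, Set.mem_range,
        forall_exists_index]
      rintro x i rfl y j rfl
      rcases le_or_gt (ℓ : ℕ) i with hi | hi
      · rw [coeff_eq_zero_of_degree_lt (lt_of_lt_of_le hg (by exact_mod_cast hi)), zero_mul]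
        exact Ideal.zero_mem _
      · have : g.coeff i * h.coeff j = (g * h.comp (X ^ ℓ)).coeff (i + ℓ * j) := by
          rw [key_coeff g h hl hg]
          congr 1
          · rw [Nat.add_mul_mod_self_left, Nat.mod_eq_of_lt hi]
          · rw [Nat.add_mul_div_left _ _ hl, Nat.div_eq_of_lt hi, zero_add]
        rw [this]
        exact _root_.coeff_mem_contentIdeal (g * h.comp (X ^ ℓ)) _
    · rw [contentIdeal_le_iff]
      intro n
      rw [key_coeff g h hl hg]
      exact Ideal.mul_mem_mul (_root_.coeff_mem_contentIdeal g _) (_root_.coeff_mem_contentIdeal h _)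
  · have hcoeff : ∀ n, (g + X ^ ℓ * h).coeff n = g.coeff n + if ℓ ≤ n then h.coeff (n - ℓ) else 0 := by
      intro n
      rw [coeff_add, coeff_X_pow_mul']
    apply le_antisymm
    · apply sup_le
      · rw [contentIdeal_le_iff]
        intro n
        rcases le_or_gt (ℓ : ℕ) n with hn | hn
        · rw [coeff_eq_zero_of_degree_lt (lt_of_lt_of_le hg (by exact_mod_cast hn))]
          exact Ideal.zero_mem _
        · have : g.coeff n = (g + X ^ ℓ * h).coeff n := by
            rw [hcoeff n, if_neg (by omega), add_zero]
          rw [this]; exact _root_.coeff_mem_contentIdeal (g + X ^ ℓ * h) _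
      · rw [contentIdeal_le_iff]
        intro n
        have : h.coeff n = (g + X ^ ℓ * h).coeff (n + ℓ) := by
          rw [hcoeff, if_pos (by omega),
            coeff_eq_zero_of_degree_lt (lt_of_lt_of_le hg (by exact_mod_cast Nat.le_add_left ℓ n)),
            zero_add, Nat.add_sub_cancel]
        rw [this]; exact _root_.coeff_mem_contentIdeal (g + X ^ ℓ * h) _
    · rw [contentIdeal_le_iff]
      intro n
      rw [hcoeff n]
      apply Ideal.add_mem
      · exact Ideal.mem_sup_left (_root_.coeff_mem_contentIdeal g _)
      · split_ifs
        · exact Ideal.mem_sup_right (_root_.coeff_mem_contentIdeal h _)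
        · exact Ideal.zero_mem _
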